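/- Let μ be a probability measure on a measurable space X, let 𝒯 be a finite collection of measurable subsets of X that is totally ordered by inclusion (a chain), let α, β ∈ (0,1), and let n ≥ 8·log(2/β)/α. Then, for x_1,…,x_n drawn i.i.d. from μ, the probability that there exists E ∈ 𝒯 with μ(E) > α and |{j ∈ [n] : x_j ∈ E}| ≤ αn/2 is at most β/2. -/

import Mathlib

open MeasureTheory

/-- **Generalization for a chain of events (Chernoff step of Theorem 3.11).**
Let `μ` be a probability measure on `X`, let `𝒯` be a finite chain (under inclusion) of
measurable subsets of `X`, let `α, β ∈ (0,1)`, and let `n ≥ 8·log(2/β)/α`.  For i.i.d.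
draws `x_1, …, x_n ∼ μ`, the probability that some `E ∈ 𝒯` satisfies `μ(E) > α` while
`|{j : x_j ∈ E}| ≤ αn/2` is at most `β/2`. -/
theorem stmt_14 (X : Type*) [MeasurableSpace X] (μ : Measure X) [IsProbabilityMeasure μ]
    (𝒯 : Finset (Set X)) (hmeas : ∀ E ∈ 𝒯, MeasurableSet E)
    (hchain : IsChain (· ⊆ ·) (𝒯 : Set (Set X)))
    (α β : ℝ) (hα : α ∈ Set.Ioo (0:ℝ) 1) (hβ : β ∈ Set.Ioo (0:ℝ) 1)
    (n : ℕ) (hn : 8 * Real.log (2 / β) / α ≤ (n : ℝ)) :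
    Measure.pi (fun _ : Fin n => μ)
      {x : Fin n → X | ∃ E ∈ 𝒯, ENNReal.ofReal α < μ E ∧
        (Nat.card {j : Fin n // x j ∈ E} : ℝ) ≤ α * n / 2} ≤
      ENNReal.ofReal (β / 2) := by
  classical
  obtain ⟨hα0, hα1⟩ := hα
  obtain ⟨hβ0, hβ1⟩ := hβ
  set 𝒯' : Finset (Set X) := 𝒯.filter (fun E => ENNReal.ofReal α < μ E) with h𝒯'
  by_cases hne : 𝒯'.Nonempty
  swap
  · have hempty : {x : Fin n → X | ∃ E ∈ 𝒯, ENNReal.ofReal α < μ E ∧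
        (Nat.card {j : Fin n // x j ∈ E} : ℝ) ≤ α * n / 2} = ∅ := by
      ext x
      simp only [Set.mem_setOf_eq, Set.mem_empty_iff_false, iff_false, not_exists]
      rintro E ⟨hE, hμE, -⟩
      exact hne ⟨E, Finset.mem_filter.mpr ⟨hE, hμE⟩⟩
    rw [hempty, measure_empty]
    exact zero_le
  obtain ⟨E₀, hE₀', hmin⟩ := 𝒯'.exists_minimal hne
  have hE₀𝒯 : E₀ ∈ 𝒯 := (Finset.mem_filter.mp hE₀').1
  have hμE₀ : ENNReal.ofReal α < μ E₀ := (Finset.mem_filter.mp hE₀').2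
  have hleast : ∀ E ∈ 𝒯', E₀ ⊆ E := by
    intro E hE
    by_cases h : E = E₀
    · exact h ▸ subset_rfl
    rcases hchain hE₀𝒯 ((Finset.mem_filter.mp hE).1) (fun hh => h hh.symm) with h1 | h1
    · exact h1
    · by_contra hc
      exact hc (hmin hE h1)
  -- real probability of E₀
  set p : ℝ := (μ E₀).toReal with hp
  have hpα : α < p := (ENNReal.ofReal_lt_iff_lt_toReal hα0.le (measure_ne_top μ E₀)).mp hμE₀
  have hp1 : p ≤ 1 := by
    rw [hp]
    have := prob_le_one (μ := μ) (s := E₀)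
    calc (μ E₀).toReal ≤ (1 : ENNReal).toReal := ENNReal.toReal_mono ENNReal.one_ne_top this
    _ = 1 := by simp
  -- the indicator sum
  set ind : X → ℝ := fun y => if y ∈ E₀ then 1 else 0 with hind
  set S : (Fin n → X) → ℝ := fun x => ∑ j, ind (x j) with hS
  have hScard : ∀ x : Fin n → X, (Nat.card {j : Fin n // x j ∈ E₀} : ℝ) = S x := by
    intro x
    rw [Nat.card_eq_fintype_card, Fintype.card_subtype, Finset.card_filter, hS]
    push_cast
    refine Finset.sum_congr rfl fun j _ => ?_
    simp only [hind]
  -- reduce the event to the single event for E₀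
  have hsub : {x : Fin n → X | ∃ E ∈ 𝒯, ENNReal.ofReal α < μ E ∧
        (Nat.card {j : Fin n // x j ∈ E} : ℝ) ≤ α * n / 2} ⊆ {x | S x ≤ α * n / 2} := by
    rintro x ⟨E, hE, hμE, hcard⟩
    have hE' : E ∈ 𝒯' := Finset.mem_filter.mpr ⟨hE, hμE⟩
    have hsubE : E₀ ⊆ E := hleast E hE'
    have hmono : Nat.card {j : Fin n // x j ∈ E₀} ≤ Nat.card {j : Fin n // x j ∈ E} := by
      simp only [Nat.card_eq_fintype_card]
      exact Fintype.card_subtype_mono _ _ (fun j hj => hsubE hj)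
    rw [Set.mem_setOf_eq, ← hScard x]
    exact le_trans (by exact_mod_cast hmono) hcard
  refine le_trans (measure_mono hsub) ?_
  -- Chernoff bound
  set t : ℝ := -Real.log 2 with ht
  have ht0 : t ≤ 0 := neg_nonpos.mpr (Real.log_nonneg one_le_two)
  have hexp_t : Real.exp t = 2⁻¹ := by
    rw [ht, Real.exp_neg, Real.exp_log two_pos]
  -- measurability of S
  have hmeasE₀ : MeasurableSet E₀ := hmeas E₀ hE₀𝒯
  have hind_meas : Measurable ind := by
    rw [hind]; exact Measurable.ite hmeasE₀ measurable_const measurable_const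
  have hSmeas : Measurable S := by
    rw [hS]; exact Finset.measurable_sum _ fun j _ => hind_meas.comp (measurable_pi_apply j)
  -- integrability of exp (t * S)
  have hSnonneg : ∀ x, 0 ≤ S x := by
    intro x; rw [hS]
    exact Finset.sum_nonneg fun j _ => by simp only [hind]; split <;> norm_num
  have hint : Integrable (fun x => Real.exp (t * S x)) (Measure.pi fun _ : Fin n => μ) := by
    refine Integrable.mono' (integrable_const 1)
      ((Real.measurable_exp.comp (hSmeas.const_mul t)).aestronglyMeasurable) ?_
    refine Filter.Eventually.of_forall fun x => ?_
    rw [Real.norm_eq_abs, abs_of_pos (Real.exp_pos _)]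
    exact Real.exp_le_one_iff.mpr (mul_nonpos_of_nonpos_of_nonneg ht0 (hSnonneg x))
  have hchern := ProbabilityTheory.measure_le_le_exp_mul_mgf (X := S)
    (μ := Measure.pi fun _ : Fin n => μ) (α * n / 2) ht0 hint
  -- compute the mgf
  letI : MeasureSpace X := ⟨μ⟩
  have hpi : Measure.pi (fun _ : Fin n => μ) = (volume : Measure (Fin n → X)) := rfl
  have h1 : ∫ y, Real.exp (t * ind y) ∂μ = 1 - p / 2 := by
    have heq : (fun y => Real.exp (t * ind y)) =
        fun y => E₀.indicator (fun _ => (2⁻¹ - 1 : ℝ)) y + 1 := by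
      funext y
      rw [hind]
      by_cases hy : y ∈ E₀ <;> simp [hy, Set.indicator_of_mem, Set.indicator_of_notMem, hexp_t]
    rw [heq, integral_add ((integrable_const _).indicator hmeasE₀) (integrable_const 1),
      integral_indicator_const _ hmeasE₀, integral_const]
    simp only [measureReal_def, measure_univ, ENNReal.toReal_one, smul_eq_mul, one_mul, ← hp]
    ring
  have hmgf : ProbabilityTheory.mgf S (Measure.pi fun _ : Fin n => μ) t = (1 - p / 2) ^ n := by
    rw [ProbabilityTheory.mgf]
    have heq : (fun x : Fin n → X => Real.exp (t * S x)) =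
        fun x => ∏ j, Real.exp (t * ind (x j)) := by
      funext x
      rw [hS, Finset.mul_sum, Real.exp_sum]
    calc ∫ x, Real.exp (t * S x) ∂(Measure.pi fun _ : Fin n => μ)
        = ∫ x : Fin n → X, ∏ j, Real.exp (t * ind (x j)) := by rw [heq, hpi]
      _ = (∫ y : X, Real.exp (t * ind y)) ^ Fintype.card (Fin n) :=
          integral_fintype_prod_eq_pow (ι := Fin n) (fun y => Real.exp (t * ind y))
      _ = (1 - p / 2) ^ n := by rw [Fintype.card_fin]; exact congrArg (· ^ n) h1
  rw [hmgf] at hchern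
  -- numeric bound
  have hb2 : (1 - p / 2) ^ n ≤ Real.exp (-(p / 2)) ^ n := by
    refine pow_le_pow_left₀ (by linarith) ?_ n
    have := Real.add_one_le_exp (-(p / 2))
    linarith
  have hbound : Real.exp (-t * (α * n / 2)) * (1 - p / 2) ^ n ≤ β / 2 := by
    have hb3 : Real.exp (-(p / 2)) ^ n = Real.exp ((n : ℝ) * -(p / 2)) :=
      (Real.exp_nat_mul _ n).symm
    have step1 : Real.exp (-t * (α * n / 2)) * (1 - p / 2) ^ n ≤
        Real.exp (-t * (α * n / 2) + (n : ℝ) * -(p / 2)) := by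
      rw [Real.exp_add, ← hb3]
      exact mul_le_mul_of_nonneg_left hb2 (Real.exp_pos _).le
    have hlog2 : Real.log 2 < 0.6931471808 := Real.log_two_lt_d9
    have hn0 : (0 : ℝ) ≤ n := Nat.cast_nonneg n
    have harg : -t * (α * n / 2) + (n : ℝ) * -(p / 2) ≤ -(α * n / 8) := by
      rw [ht, neg_neg]
      have h4 : α * n * (Real.log 2) ≤ α * n * 0.6931471808 := by
        have : (0:ℝ) ≤ α * n := by positivity
        nlinarith
      have h5 : (n : ℝ) * p ≥ (n : ℝ) * α := by nlinarith
      nlinarith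
    have step2 : Real.exp (-t * (α * n / 2) + (n : ℝ) * -(p / 2)) ≤
        Real.exp (-(α * n / 8)) := Real.exp_le_exp.mpr harg
    have hfin : Real.exp (-(α * n / 8)) ≤ β / 2 := by
      have hlogle : Real.log (2 / β) ≤ α * n / 8 := by
        rw [div_le_iff₀ hα0] at hn
        linarith
      have hββ : Real.log (β / 2) = -Real.log (2 / β) := by
        rw [← Real.log_inv]
        congr 1
        field_simp
      have : -(α * n / 8) ≤ Real.log (β / 2) := by rw [hββ]; linarith
      calc Real.exp (-(α * n / 8)) ≤ Real.exp (Real.log (β / 2)) := Real.exp_le_exp.mpr this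
        _ = β / 2 := Real.exp_log (by linarith)
    linarith
  have hfinal : ((Measure.pi fun _ : Fin n => μ) {x | S x ≤ α * n / 2}).toReal ≤ β / 2 :=
    le_trans hchern hbound
  exact (ENNReal.le_ofReal_iff_toReal_le (measure_ne_top _ _) (by linarith)).mpr hfinal
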